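/- Let L and L' be free abelian groups of finite rank n and let f : L' → L be an injective homomorphism with finite cokernel. Then the finite abelian group L / f(L') is isomorphic to Hom( Hom(L, ℤ) / f^⊤(Hom(L', ℤ)), ℂˣ ), where f^⊤ : Hom(L,ℤ) → Hom(L',ℤ) is the transpose map precomposition with f. -/

import Mathlib

open Complex

noncomputable def cexpHom : ℂ →+ Additive ℂˣ where
  toFun z := Additive.ofMul (Units.mk0 (Complex.exp (2 * Real.pi * Complex.I * z))
    (Complex.exp_ne_zero _))
  map_zero' := by
    rw [← ofMul_one]
    exact congrArg Additive.ofMul (Units.ext (by simp))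
  map_add' x y := by
    rw [← ofMul_mul]
    exact congrArg Additive.ofMul (Units.ext (by simp [mul_add, Complex.exp_add]))

lemma cexpHom_apply (z : ℂ) : cexpHom z = Additive.ofMul (Units.mk0
    (Complex.exp (2 * Real.pi * Complex.I * z)) (Complex.exp_ne_zero _)) := rfl

lemma cexpHom_eq_zero_iff {z : ℂ} : cexpHom z = 0 ↔ ∃ n : ℤ, z = (n : ℂ) := by
  have h2 : (2 * (Real.pi : ℂ) * Complex.I) ≠ 0 := Complex.two_pi_I_ne_zero
  rw [cexpHom_apply, ← ofMul_one, Additive.ofMul.apply_eq_iff_eq, Units.ext_iff]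
  show Complex.exp _ = 1 ↔ _
  rw [Complex.exp_eq_one_iff]
  constructor
  · rintro ⟨n, hn⟩
    refine ⟨n, mul_left_cancel₀ h2 ?_⟩
    rw [hn]; ring
  · rintro ⟨n, rfl⟩
    exact ⟨n, by ring⟩

lemma cexpHom_surjective : Function.Surjective cexpHom := by
  intro u
  have h2 : (2 * (Real.pi : ℂ) * Complex.I) ≠ 0 := Complex.two_pi_I_ne_zero
  refine ⟨Complex.log (Additive.toMul u : ℂˣ) / (2 * Real.pi * Complex.I), ?_⟩
  rw [cexpHom_apply]
  show _ = Additive.ofMul (Additive.toMul u)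
  refine congrArg Additive.ofMul (Units.ext ?_)
  show Complex.exp _ = _
  rw [mul_div_cancel₀ _ h2, Complex.exp_log (Units.ne_zero _)]


/-- The `ℤ`-linear maps to `Additive ℂˣ` are the same as monoid homs to `ℂˣ`. -/
noncomputable def linearCharEquiv (Q : Type*) [AddCommGroup Q] [Module ℤ Q] :
    (Q →ₗ[ℤ] Additive ℂˣ) ≃+ Additive (Multiplicative Q →* ℂˣ) where
  toFun Ψ := Additive.ofMul (α := Multiplicative Q →* ℂˣ)
    { toFun := fun q => Additive.toMul (Ψ q.toAdd)
      map_one' := by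
        show Additive.toMul (Ψ (0 : Q)) = 1
        rw [map_zero]
        rfl
      map_mul' := by
        intro q r
        show Additive.toMul (Ψ (q.toAdd + r.toAdd)) = _
        rw [map_add]
        rfl }
  invFun g :=
    let Fg : Q →+ Additive ℂˣ :=
      { toFun := fun q => Additive.ofMul ((Additive.toMul g) (Multiplicative.ofAdd q))
        map_zero' := by
          show Additive.ofMul ((Additive.toMul g) 1) = 0
          rw [map_one]
          rfl
        map_add' := by
          intro a b
          show Additive.ofMul ((Additive.toMul g)
            (Multiplicative.ofAdd a * Multiplicative.ofAdd b)) = _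
          rw [map_mul]
          rfl }
    { toFun := Fg
      map_add' := Fg.map_add
      map_smul' := fun c q => map_intCast_smul Fg ℤ ℤ c q }
  left_inv Ψ := LinearMap.ext fun q => rfl
  right_inv g := congrArg Additive.ofMul (MonoidHom.ext fun q => rfl)
  map_add' Ψ₁ Ψ₂ := congrArg Additive.ofMul (MonoidHom.ext fun q => rfl)

/-- The cokernel of the transpose map is isomorphic to the group of `ℂˣ`-valued additive
characters of the (finite) cokernel of `f`. -/
theorem dual_coker_addEquiv_char (L L' : Type*)
    [AddCommGroup L] [Module ℤ L] [Module.Free ℤ L]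
    [AddCommGroup L'] [Module ℤ L']
    (f : L' →ₗ[ℤ] L) (hf : Function.Injective f)
    (hcoker : Finite (L ⧸ LinearMap.range f)) :
    Nonempty ((Module.Dual ℤ L' ⧸ LinearMap.range (Module.Dual.transpose (R := ℤ) f)) ≃+
      Additive (Multiplicative (L ⧸ LinearMap.range f) →* ℂˣ)) := by
  classical
  set N := LinearMap.range f with hN
  set Q := L ⧸ N with hQ
  set e : ℕ := Nat.card Q with he
  have hepos : 0 < e := Nat.card_pos
  have hene : (e : ℤ) ≠ 0 := by exact_mod_cast hepos.ne'
  have heC : (e : ℂ) ≠ 0 := by exact_mod_cast hepos.ne'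
  -- every `e • x` lies in `N`
  have hmem : ∀ x : L, ∃ y : L', f y = (e : ℤ) • x := by
    intro x
    have h0 : ((e : ℤ) • (Submodule.Quotient.mk x : Q)) = 0 := by
      rw [natCast_zsmul]
      exact card_nsmul_eq_zero'
    rw [← Submodule.Quotient.mk_smul] at h0
    exact (LinearMap.mem_range).mp ((Submodule.Quotient.mk_eq_zero N).mp h0)
  -- the "division by e" map `μ : L → L'` with `f (μ x) = e • x`
  have hμ0 : ∀ x : L, f ((hmem x).choose) = (e : ℤ) • x := fun x => (hmem x).choose_spec
  set μ : L →ₗ[ℤ] L' :=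
    { toFun := fun x => (hmem x).choose
      map_add' := by
        intro a b
        apply hf
        rw [map_add, hμ0, hμ0, hμ0]
        rw [← Int.cast_smul_eq_zsmul (R := ℤ) ((e : ℕ) : ℤ)]
        rw [← Int.cast_smul_eq_zsmul (R := ℤ) ((e : ℕ) : ℤ) a]
        rw [← Int.cast_smul_eq_zsmul (R := ℤ) ((e : ℕ) : ℤ) b]
        exact smul_add _ _ _
      map_smul' := by
        intro c a
        apply hf
        rw [RingHom.id_apply, LinearMap.map_smul, hμ0, hμ0]
        rw [← Int.cast_smul_eq_zsmul (R := ℤ) ((e : ℕ) : ℤ)]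
        rw [← Int.cast_smul_eq_zsmul (R := ℤ) ((e : ℕ) : ℤ)]
        letI : MulAction ℤ L := Module.toDistribMulAction.toMulAction
        rw [smul_smul, smul_smul, mul_comm] } with hμdef
  have hμ : ∀ x : L, f (μ x) = (e : ℤ) • x := hμ0
  have hμf : ∀ y : L', μ (f y) = (e : ℤ) • y := by
    intro y
    apply hf
    rw [hμ]
    exact (map_zsmul f _ y).symm
  -- the character `x ↦ exp(2πi φ(μ x)/e)` associated to a functional `φ` on `L'`
  set A : Module.Dual ℤ L' → (L →+ Additive ℂˣ) := fun φ =>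
    cexpHom.comp ((AddMonoidHom.mulLeft ((e : ℂ)⁻¹)).comp
      ((Int.castAddHom ℂ).comp (φ.toAddMonoidHom.comp μ.toAddMonoidHom))) with hA
  have hAapply : ∀ φ x, A φ x = cexpHom ((e : ℂ)⁻¹ * ((φ (μ x) : ℤ) : ℂ)) := fun φ x => rfl
  have hint1 : ∀ (φ : Module.Dual ℤ L') (y : L'), A φ (f y) = 0 := by
    intro φ y
    rw [hAapply, hμf, map_zsmul, zsmul_eq_mul]
    push_cast
    rw [inv_mul_cancel_left₀ heC]
    exact cexpHom_eq_zero_iff.mpr ⟨φ y, rfl⟩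
  have hsmulC : ∀ (c : ℤ) (v : ℂ), cexpHom ((c : ℂ) * v) = c • cexpHom v := by
    intro c v
    rw [← smul_eq_mul, Int.cast_smul_eq_zsmul]
    exact map_zsmul cexpHom c v
  -- `A φ` as a linear map
  set AL : Module.Dual ℤ L' → (L →ₗ[ℤ] Additive ℂˣ) := fun φ =>
    { toFun := A φ
      map_add' := (A φ).map_add
      map_smul' := by
        intro c x
        dsimp only [RingHom.id_apply]
        rw [hAapply, hAapply, μ.map_smul, φ.map_smul, smul_eq_mul]
        push_cast
        rw [show (e : ℂ)⁻¹ * ((c : ℂ) * ((φ (μ x) : ℤ) : ℂ))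
          = (c : ℂ) * ((e : ℂ)⁻¹ * ((φ (μ x) : ℤ) : ℂ)) from by ring]
        exact hsmulC c _ } with hAL
  have hALapply : ∀ φ x, AL φ x = A φ x := fun φ x => rfl
  have hker1 : ∀ φ, N ≤ LinearMap.ker (AL φ) := by
    intro φ x hx
    obtain ⟨y, rfl⟩ := hx
    exact hint1 φ y
  set B := LinearMap.mk (σ := RingHom.id ℤ)
    (AddHom.mk (fun φ : Module.Dual ℤ L' => Submodule.liftQ N (AL φ) (hker1 φ))
      (by
        intro φ₁ φ₂
        refine Submodule.linearMap_qext _ ?_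
        ext x
        simp only [LinearMap.comp_apply, Submodule.mkQ_apply, Submodule.liftQ_apply,
          LinearMap.add_apply]
        rw [hALapply, hALapply, hALapply, hAapply, hAapply, hAapply, LinearMap.add_apply]
        push_cast
        rw [mul_add]
        exact congrArg (fun u => ((Additive.toMul u : ℂˣ) : ℂ)) (map_add cexpHom _ _)))
    (by
      intro c φ
      refine Submodule.linearMap_qext _ ?_
      ext x
      simp only [LinearMap.comp_apply, Submodule.mkQ_apply, Submodule.liftQ_apply,
        RingHom.id_apply, LinearMap.smul_apply]
      rw [hALapply, hALapply, hAapply, hAapply, LinearMap.smul_apply, smul_eq_mul]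
      push_cast
      rw [show (e : ℂ)⁻¹ * ((c : ℂ) * ((φ (μ x) : ℤ) : ℂ))
        = (c : ℂ) * ((e : ℂ)⁻¹ * ((φ (μ x) : ℤ) : ℂ)) from by ring]
      exact congrArg (fun u => ((Additive.toMul u : ℂˣ) : ℂ)) (hsmulC c _)) with hB
  have hBapply : ∀ φ x, B φ (Submodule.Quotient.mk x) = A φ x := fun φ x => rfl
  set T := LinearMap.range (Module.Dual.transpose (R := ℤ) f) with hT
  -- `B` kills the range of the transpose
  have hker2 : T ≤ LinearMap.ker B := by
    rintro φ hφ
    obtain ⟨ψ, rfl⟩ := hφ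
    rw [LinearMap.mem_ker]
    refine Submodule.linearMap_qext _ ?_
    ext x
    simp only [LinearMap.comp_apply, Submodule.mkQ_apply, LinearMap.zero_apply,
      LinearMap.zero_comp]
    rw [hBapply, hAapply]
    rw [show (Module.Dual.transpose (R := ℤ) f ψ) (μ x) = ψ (f (μ x)) from rfl]
    rw [hμ, map_zsmul, zsmul_eq_mul]
    push_cast
    rw [inv_mul_cancel_left₀ heC]
    exact congrArg (fun u => ((Additive.toMul u : ℂˣ) : ℂ)) (cexpHom_eq_zero_iff.mpr ⟨ψ x, rfl⟩)
  have hker2' : LinearMap.ker B ≤ T := by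
    intro φ hφ
    rw [LinearMap.mem_ker] at hφ
    have h0 : ∀ x : L, A φ x = 0 := by
      intro x
      rw [← hBapply φ x, hφ]
      rfl
    have hdvd : ∀ x : L, (e : ℤ) ∣ φ (μ x) := by
      intro x
      have h1 := cexpHom_eq_zero_iff.mp (by rw [← hAapply φ x]; exact h0 x)
      obtain ⟨m, hm⟩ := h1
      refine ⟨m, ?_⟩
      have h2 : ((φ (μ x) : ℤ) : ℂ) = ((e * m : ℤ) : ℂ) := by
        push_cast
        rw [← hm]
        field_simp
      exact_mod_cast h2
    have key : ∀ x : L, (e : ℤ) * (φ (μ x) / e) = φ (μ x) := fun x =>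
      Int.mul_ediv_cancel' (hdvd x)
    set ψ : Module.Dual ℤ L :=
      { toFun := fun x => φ (μ x) / (e : ℤ)
        map_add' := by
          intro a b
          apply mul_left_cancel₀ hene
          rw [key, mul_add, key, key, map_add, map_add]
        map_smul' := by
          intro c x
          dsimp only [RingHom.id_apply]
          apply mul_left_cancel₀ hene
          rw [key, μ.map_smul, φ.map_smul, smul_eq_mul, smul_eq_mul, mul_left_comm, key] }
      with hψdef
    refine ⟨ψ, ?_⟩
    ext y
    show ψ (f y) = φ y
    have : ψ (f y) = φ (μ (f y)) / e := rfl
    rw [this, hμf, map_zsmul, zsmul_eq_mul]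
    exact Int.mul_ediv_cancel_left _ hene
  set Bbar := Submodule.liftQ T B hker2 with hBbardef
  have hinj : Function.Injective Bbar := by
    rw [← LinearMap.ker_eq_bot]
    exact Submodule.ker_liftQ_eq_bot T B hker2 hker2'
  have hsurj : Function.Surjective Bbar := by
    intro ψ
    -- lift `ψ ∘ mkQ` through `cexpHom` using a basis of `L`
    set b := Module.Free.chooseBasis ℤ L with hb
    set g : Module.Free.ChooseBasisIndex ℤ L → ℂ :=
      fun i => (cexpHom_surjective (ψ (Submodule.Quotient.mk (b i)))).choose with hg0
    have hg : ∀ i, cexpHom (g i) = ψ (Submodule.Quotient.mk (b i)) :=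
      fun i => (cexpHom_surjective _).choose_spec
    set ψ' : L →ₗ[ℤ] ℂ := b.constr ℤ g with hψ'def
    set Ψ : L →ₗ[ℤ] Additive ℂˣ :=
      { toFun := fun x => cexpHom (ψ' x)
        map_add' := by
          intro a b'
          rw [map_add, map_add]
        map_smul' := by
          intro c x
          dsimp only [RingHom.id_apply]
          rw [ψ'.map_smul]
          exact map_zsmul cexpHom c (ψ' x) } with hΨdef
    have hΨeq : Ψ = ψ ∘ₗ (Submodule.mkQ N) := by
      refine b.ext fun i => ?_
      show cexpHom (ψ' (b i)) = ψ (Submodule.Quotient.mk (b i))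
      rw [hψ'def, Module.Basis.constr_basis]
      exact hg i
    have hΨ : ∀ x : L, cexpHom (ψ' x) = ψ (Submodule.Quotient.mk x) := by
      intro x
      have := LinearMap.congr_fun hΨeq x
      exact this
    have hintψ : ∀ y : L', ∃ m : ℤ, ψ' (f y) = (m : ℂ) := by
      intro y
      refine cexpHom_eq_zero_iff.mp ?_
      rw [hΨ (f y), (Submodule.Quotient.mk_eq_zero N).mpr ⟨y, rfl⟩, map_zero]
    have hφc : ∀ y : L', ((hintψ y).choose : ℂ) = ψ' (f y) := fun y => ((hintψ y).choose_spec).symm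
    set φ : Module.Dual ℤ L' :=
      { toFun := fun y => (hintψ y).choose
        map_add' := by
          intro a b'
          apply Int.cast_injective (α := ℂ)
          push_cast
          rw [hφc, hφc, hφc, map_add, map_add]
        map_smul' := by
          intro c y
          dsimp only [RingHom.id_apply]
          apply Int.cast_injective (α := ℂ)
          rw [hφc, f.map_smul, ψ'.map_smul]
          rw [smul_eq_mul]
          push_cast
          rw [hφc]
          exact zsmul_eq_mul _ c } with hφdef
    refine ⟨Submodule.Quotient.mk φ, ?_⟩
    show B φ = ψ
    refine Submodule.linearMap_qext _ ?_
    ext x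
    simp only [LinearMap.comp_apply, Submodule.mkQ_apply]
    rw [hBapply, hAapply]
    have h1 : ((φ (μ x) : ℤ) : ℂ) = ψ' (f (μ x)) := hφc (μ x)
    rw [h1, hμ]
    rw [show ψ' ((e : ℤ) • x) = ((e : ℤ) : ℂ) * ψ' x from by
      rw [map_zsmul]
      exact zsmul_eq_mul _ _]
    push_cast
    rw [inv_mul_cancel_left₀ heC]
    exact congrArg (fun u => ((Additive.toMul u : ℂˣ) : ℂ)) (hΨ x)
  exact ⟨(LinearEquiv.ofBijective Bbar ⟨hinj, hsurj⟩).toAddEquiv.trans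
    (@linearCharEquiv (L ⧸ N) _ (Submodule.Quotient.module N))⟩

/-- `Additive (Multiplicative Q)` is `Q`. -/
def additiveMultiplicativeAddEquiv (Q : Type*) [AddZeroClass Q] :
    Additive (Multiplicative Q) ≃+ Q :=
  AddEquiv.mk' (Additive.toMul.trans Multiplicative.toAdd) (fun _ _ => rfl)

/-- Let `L` and `L'` be free abelian groups of finite rank `n` and `f : L' → L` an
injective homomorphism with finite cokernel.  Then `L / f(L')` is isomorphic to
`Hom( Hom(L,ℤ) / f^⊤(Hom(L',ℤ)), ℂˣ )`, where `f^⊤` is precomposition with `f`. -/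
theorem cokernel_iso_char_group_of_dual_cokernel
    (n : ℕ) (L L' : Type*)
    [AddCommGroup L] [Module ℤ L] [Module.Free ℤ L]
    [AddCommGroup L'] [Module ℤ L'] [Module.Free ℤ L']
    (hL : Module.finrank ℤ L = n) (hL' : Module.finrank ℤ L' = n)
    (f : L' →ₗ[ℤ] L) (hf : Function.Injective f)
    (hcoker : Finite (L ⧸ LinearMap.range f)) :
    Nonempty ((L ⧸ LinearMap.range f) ≃+
      Additive (Multiplicative
        (Module.Dual ℤ L' ⧸ LinearMap.range (Module.Dual.transpose (R := ℤ) f)) →* ℂˣ)) := by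
  obtain ⟨E⟩ := dual_coker_addEquiv_char L L' f hf hcoker
  have finQm : Finite (Multiplicative (L ⧸ LinearMap.range f)) :=
    Finite.of_equiv _ Multiplicative.ofAdd
  have h1 : NeZero (Monoid.exponent (Multiplicative (L ⧸ LinearMap.range f))) :=
    ⟨Monoid.exponent_ne_zero_of_finite⟩
  obtain ⟨e1⟩ := CommGroup.monoidHom_mulEquiv_of_hasEnoughRootsOfUnity
    (Multiplicative (L ⧸ LinearMap.range f)) ℂ
  have eCQ : (Module.Dual ℤ L' ⧸ LinearMap.range (Module.Dual.transpose (R := ℤ) f)) ≃+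
      (L ⧸ LinearMap.range f) :=
    E.trans ((MulEquiv.toAdditive e1).trans (additiveMultiplicativeAddEquiv _))
  have finC : Finite (Module.Dual ℤ L' ⧸ LinearMap.range (Module.Dual.transpose (R := ℤ) f)) :=
    Finite.of_equiv _ eCQ.symm.toEquiv
  have finCm : Finite (Multiplicative
      (Module.Dual ℤ L' ⧸ LinearMap.range (Module.Dual.transpose (R := ℤ) f))) :=
    Finite.of_equiv _ Multiplicative.ofAdd
  have h2 : NeZero (Monoid.exponent (Multiplicative
      (Module.Dual ℤ L' ⧸ LinearMap.range (Module.Dual.transpose (R := ℤ) f)))) :=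
    ⟨Monoid.exponent_ne_zero_of_finite⟩
  obtain ⟨e2⟩ := CommGroup.monoidHom_mulEquiv_of_hasEnoughRootsOfUnity
    (Multiplicative (Module.Dual ℤ L' ⧸ LinearMap.range (Module.Dual.transpose (R := ℤ) f))) ℂ
  exact ⟨eCQ.symm.trans ((additiveMultiplicativeAddEquiv _).symm.trans
    (MulEquiv.toAdditive e2).symm)⟩
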